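/- Let f be a polymorphism of (1in3, T1) of arity n such that f(∅) = 0 and f has no 2-set of size at most 2 (i.e., f(X) ≠ 2 for every X ⊆ [n] with |X| ≤ 2). Then |E(f)| ≤ 5. -/

import Mathlib

/-- `f` is a polymorphism of `(1in3, B)` where `B` has relation `R`:
for every partition of `[n]` into three pairwise disjoint blocks `X, Y, Z`,
the triple of values is in `R`. -/
def IsPolymorphism {n : ℕ} {B : Type*} (R : B → B → B → Prop) (f : Finset (Fin n) → B) : Prop :=
  ∀ X Y Z : Finset (Fin n), Disjoint X Y → Disjoint X Z → Disjoint Y Z →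
    X ∪ Y ∪ Z = Finset.univ → R (f X) (f Y) (f Z)

/-- The relation of `relT1`: all coordinate permutations of (0,0,1), (0,0,2), (1,1,2). -/
def relT1 (a b c : ℕ) : Prop :=
  ({a, b, c} : Multiset ℕ) = {0, 0, 1} ∨ ({a, b, c} : Multiset ℕ) = {0, 0, 2} ∨
    ({a, b, c} : Multiset ℕ) = {1, 1, 2}


/-- `E(f)`: the set of coordinates `x` whose singleton is a 1-set or a 2-set. -/
def Eset {n : ℕ} (f : Finset (Fin n) → ℕ) : Finset (Fin n) :=
  Finset.univ.filter (fun x => f {x} = 1 ∨ f {x} = 2)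

lemma relT1_elim {a b c : ℕ} (h : relT1 a b c) :
    (a + b + c = 1 ∧ a ≤ 1 ∧ b ≤ 1 ∧ c ≤ 1) ∨
    (a + b + c = 2 ∧ a ≠ 1 ∧ b ≠ 1 ∧ c ≠ 1) ∨
    (a + b + c = 4 ∧ 1 ≤ a ∧ 1 ≤ b ∧ 1 ≤ c ∧ a ≤ 2 ∧ b ≤ 2 ∧ c ≤ 2) := by
  have ha : a ∈ ({a, b, c} : Multiset ℕ) := by simp
  have hb : b ∈ ({a, b, c} : Multiset ℕ) := by simp
  have hc : c ∈ ({a, b, c} : Multiset ℕ) := by simp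
  rcases h with h | h | h <;>
    rw [h] at ha hb hc <;> have hs := congrArg Multiset.sum h <;>
    simp at ha hb hc hs <;> omega

theorem stmt_12 (n : ℕ) (hn : 1 ≤ n) (f : Finset (Fin n) → ℕ) (hf : IsPolymorphism relT1 f)
    (h0 : f ∅ = 0) (h2 : ∀ X : Finset (Fin n), X.card ≤ 2 → f X ≠ 2) :
    (Eset f).card ≤ 5 := by
  by_contra hcard
  push_neg at hcard
  set E : Finset (Fin n) := Eset f with hE
  have hmemE : ∀ x : Fin n, x ∈ E ↔ (f {x} = 1 ∨ f {x} = 2) := by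
    intro x; rw [hE]; simp [Eset]
  -- basic polymorphism instance
  have poly2 : ∀ X Y : Finset (Fin n), Disjoint X Y → relT1 (f X) (f Y) (f (X ∪ Y)ᶜ) := by
    intro X Y h
    exact hf X Y (X ∪ Y)ᶜ h
      (disjoint_compl_right.mono_left Finset.subset_union_left)
      (disjoint_compl_right.mono_left Finset.subset_union_right)
      (Finset.union_compl _)
  -- singletons in E have value 1
  have one1 : ∀ x : Fin n, x ∈ E → f {x} = 1 := by
    intro x hx
    rcases (hmemE x).1 hx with h | h
    · exact h
    · exact absurd h (h2 {x} (by simp))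
  -- singletons outside E have value 0
  have zero1 : ∀ z : Fin n, z ∉ E → f {z} = 0 := by
    intro z hz
    have hne := (hmemE z).not.1 hz
    push_neg at hne
    have h := poly2 {z} ∅ (Finset.disjoint_empty_right _)
    rw [h0, Finset.union_empty] at h
    have := relT1_elim h
    omega
  -- complement of an E-pair has value 2
  have pairc2 : ∀ x y : Fin n, x ∈ E → y ∈ E → x ≠ y → f ({x, y} : Finset (Fin n))ᶜ = 2 := by
    intro x y hx hy hxy
    have h := poly2 {x} {y} (Finset.disjoint_singleton.mpr hxy)
    have hu : ({x} : Finset (Fin n)) ∪ {y} = {x, y} := by ext; simp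
    rw [hu, one1 x hx, one1 y hy] at h
    have := relT1_elim h
    omega
  -- E-pairs have value 0
  have pair0 : ∀ x y : Fin n, x ∈ E → y ∈ E → x ≠ y → f ({x, y} : Finset (Fin n)) = 0 := by
    intro x y hx hy hxy
    have h := poly2 {x, y} ∅ (Finset.disjoint_empty_right _)
    rw [h0, Finset.union_empty, pairc2 x y hx hy hxy] at h
    have := relT1_elim h
    omega
  -- mixed pairs (one in E, one out) have value 1
  have mix1 : ∀ y z : Fin n, y ∈ E → z ∉ E → f ({y, z} : Finset (Fin n)) = 1 := by
    intro y z hy hz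
    have hyz : y ≠ z := fun h => hz (h ▸ hy)
    have h1 := poly2 {y} {z} (Finset.disjoint_singleton.mpr hyz)
    have hu : ({y} : Finset (Fin n)) ∪ {z} = {y, z} := by ext; simp
    rw [hu, one1 y hy, zero1 z hz] at h1
    have h1' := relT1_elim h1
    have h := poly2 {y, z} ∅ (Finset.disjoint_empty_right _)
    rw [h0, Finset.union_empty] at h
    have h' := relT1_elim h
    have hne2 := h2 {y, z} (le_of_eq (Finset.card_pair hyz))
    omega
  -- the swap lemma
  have swap : ∀ a b c y : Fin n, a ∈ E → b ∈ E → c ∈ E → y ∈ E →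
      a ≠ b → a ≠ c → b ≠ c → y ≠ a → y ≠ b → y ≠ c →
      f ({a, b, c} : Finset (Fin n)) = 2 → f ({b, c, y} : Finset (Fin n)) = 2 := by
    intro a b c y ha hb hc hy hab hac hbc hya hyb hyc hA
    have hd1 : Disjoint ({a, b, c} : Finset (Fin n)) {y} :=
      Finset.disjoint_singleton_right.mpr (by simp [hya, hyb, hyc])
    have h1 := poly2 {a, b, c} {y} hd1
    rw [hA, one1 y hy] at h1
    have hR : f (({a, b, c} : Finset (Fin n)) ∪ {y})ᶜ = 1 := by
      have := relT1_elim h1; omega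
    have hd2 : Disjoint ({b, c, y} : Finset (Fin n)) {a} :=
      Finset.disjoint_singleton_right.mpr (by simp [hab, hac, Ne.symm hya])
    have h3 := poly2 {b, c, y} {a} hd2
    have hu : ({b, c, y} : Finset (Fin n)) ∪ {a} = ({a, b, c} : Finset (Fin n)) ∪ {y} := by
      ext t; simp; tauto
    rw [hu, one1 a ha, hR] at h3
    have := relT1_elim h3
    omega
  -- every 3-element subset of E has value 1
  have LT : ∀ A : Finset (Fin n), A ⊆ E → A.card = 3 → f A = 1 := by
    intro A hAE hA3
    obtain ⟨a, b, c, hab, hac, hbc, rfl⟩ := Finset.card_eq_three.mp hA3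
    have ha : a ∈ E := hAE (by simp)
    have hb : b ∈ E := hAE (by simp)
    have hc : c ∈ E := hAE (by simp)
    -- complement of the triple has value 0
    have h4 := poly2 {a, b} {c} (by simp [Finset.disjoint_left]; tauto)
    have hu : ({a, b} : Finset (Fin n)) ∪ {c} = {a, b, c} := by ext t; simp
    rw [hu, pair0 a b ha hb hab, one1 c hc] at h4
    have hcomp0 : f (({a, b, c} : Finset (Fin n)))ᶜ = 0 := by
      have := relT1_elim h4; omega
    have h5 := poly2 {a, b, c} ∅ (Finset.disjoint_empty_right _)
    rw [h0, Finset.union_empty, hcomp0] at h5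
    have h12 : f ({a, b, c} : Finset (Fin n)) = 1 ∨ f ({a, b, c} : Finset (Fin n)) = 2 := by
      have := relT1_elim h5; omega
    rcases h12 with h1 | h2set
    · exact h1
    · exfalso
      have hsub : ({a, b, c} : Finset (Fin n)) ⊆ E := hAE
      have hcard3 : 3 ≤ (E \ {a, b, c}).card := by
        have := Finset.card_sdiff_of_subset hsub
        rw [hA3] at this
        omega
      obtain ⟨Y, hYsub, hY3⟩ := Finset.exists_subset_card_eq hcard3
      obtain ⟨y1, y2, y3, h12', h13', h23', rfl⟩ := Finset.card_eq_three.mp hY3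
      have hy1 := Finset.mem_sdiff.mp (hYsub (by simp : y1 ∈ ({y1, y2, y3} : Finset (Fin n))))
      have hy2 := Finset.mem_sdiff.mp (hYsub (by simp : y2 ∈ ({y1, y2, y3} : Finset (Fin n))))
      have hy3 := Finset.mem_sdiff.mp (hYsub (by simp : y3 ∈ ({y1, y2, y3} : Finset (Fin n))))
      simp at hy1 hy2 hy3
      obtain ⟨hy1E, hy1a, hy1b, hy1c⟩ := hy1
      obtain ⟨hy2E, hy2a, hy2b, hy2c⟩ := hy2
      obtain ⟨hy3E, hy3a, hy3b, hy3c⟩ := hy3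
      have s1 := swap a b c y1 ha hb hc hy1E hab hac hbc hy1a hy1b hy1c h2set
      have s2 := swap b c y1 y2 hb hc hy1E hy2E hbc (fun h => hy1b h.symm)
        (fun h => hy1c h.symm) hy2b hy2c (fun h => h12' h.symm) s1
      have s3 := swap c y1 y2 y3 hc hy1E hy2E hy3E (fun h => hy1c h.symm)
        (fun h => hy2c h.symm) h12' hy3c (fun h => h13' h.symm) (fun h => h23' h.symm) s2
      have hd : Disjoint ({a, b, c} : Finset (Fin n)) {y1, y2, y3} := by
        rw [Finset.disjoint_left]
        intro t ht ht'
        simp at ht ht'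
        rcases ht' with rfl | rfl | rfl
        · rcases ht with h | h | h
          exacts [hy1a h, hy1b h, hy1c h]
        · rcases ht with h | h | h
          exacts [hy2a h, hy2b h, hy2c h]
        · rcases ht with h | h | h
          exacts [hy3a h, hy3b h, hy3c h]
      have hfin := poly2 {a, b, c} {y1, y2, y3} hd
      rw [h2set, s3] at hfin
      have := relT1_elim hfin
      omega
  -- helper: find a fresh element of E
  have fresh : ∀ S : Finset (Fin n), S.card < E.card → ∃ y, y ∈ E ∧ y ∉ S := by
    intro S hlt
    by_contra hno
    push_neg at hno
    have : E ⊆ S := fun t ht => hno t ht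
    have := Finset.card_le_card this
    omega
  -- every odd-size subset of E (of size < |E|) has value 1
  have LJ : ∀ j : ℕ, ∀ S : Finset (Fin n), S ⊆ E → S.card = j → Odd j → j + 1 ≤ E.card →
      f S = 1 := by
    intro j
    induction j using Nat.strong_induction_on with
    | _ j ih =>
      intro S hSE hScard hodd hjk
      rcases Nat.lt_or_ge j 5 with h5 | h5
      · have : j = 1 ∨ j = 3 := by rcases hodd with ⟨m, rfl⟩; omega
        rcases this with rfl | rfl
        · obtain ⟨x, rfl⟩ := Finset.card_eq_one.mp hScard
          exact one1 x (hSE (by simp))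
        · exact LT S hSE hScard
      · -- j ≥ 5
        obtain ⟨y, hyE, hyS⟩ := fresh S (by omega)
        obtain ⟨s1, s2, hs1, hs2, hs12⟩ := Finset.one_lt_card_iff.mp (by omega : 1 < S.card)
        set P : Finset (Fin n) := S \ {s1, s2} with hP
        have hPsub : P ⊆ S := Finset.sdiff_subset
        have hpair_sub : ({s1, s2} : Finset (Fin n)) ⊆ S := by
          simp [Finset.insert_subset_iff, hs1, hs2]
        have hPcard : P.card = j - 2 := by
          rw [hP, Finset.card_sdiff_of_subset hpair_sub, Finset.card_pair hs12, hScard]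
        have hfP : f P = 1 := by
          apply ih (j - 2) (by omega) P (hPsub.trans hSE) hPcard
          · rcases hodd with ⟨m, rfl⟩; exact ⟨m - 1, by omega⟩
          · omega
        have hQ : f ({s1, s2, y} : Finset (Fin n)) = 1 := by
          apply LT
          · simp [Finset.insert_subset_iff, hSE hs1, hSE hs2, hyE]
          · have hs1y : s1 ≠ y := fun h => hyS (by rw [← h]; exact hs1)
            have hs2y : s2 ≠ y := fun h => hyS (by rw [← h]; exact hs2)
            rw [Finset.card_insert_of_notMem (by simp [hs12, hs1y]),
              Finset.card_pair hs2y]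
        have hd : Disjoint P ({s1, s2, y} : Finset (Fin n)) := by
          rw [Finset.disjoint_left]
          intro t ht ht'
          rw [hP, Finset.mem_sdiff] at ht
          simp at ht ht'
          rcases ht' with rfl | rfl | rfl
          · exact ht.2.1 rfl
          · exact ht.2.2 rfl
          · exact hyS ht.1
        have h9 := poly2 P {s1, s2, y} hd
        have hu : P ∪ ({s1, s2, y} : Finset (Fin n)) = S ∪ {y} := by
          have h1 : ({s1, s2, y} : Finset (Fin n)) = {s1, s2} ∪ {y} := by
            ext t; simp [or_assoc]
          rw [h1, ← Finset.union_assoc, hP, Finset.sdiff_union_of_subset hpair_sub]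
        rw [hu, hfP, hQ] at h9
        have hcomp2 : f ((S ∪ {y})ᶜ) = 2 := by
          have := relT1_elim h9; omega
        have h10 := poly2 S {y} (Finset.disjoint_singleton_right.mpr hyS)
        rw [one1 y hyE, hcomp2] at h10
        have := relT1_elim h10
        omega
  -- mixed sets: odd-size subset of E union anything outside E
  have LM : ∀ W : Finset (Fin n), W ⊆ Eᶜ → ∀ S : Finset (Fin n), S ⊆ E → Odd S.card →
      S.card + 1 ≤ E.card → f (S ∪ W) = 1 := by
    intro W
    induction W using Finset.induction_on with
    | empty =>
      intro _ S hSE hodd hk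
      rw [Finset.union_empty]
      exact LJ S.card S hSE rfl hodd hk
    | @insert z W' hzW ih =>
      intro hsub S hSE hodd hk
      have hzE : z ∉ E := by
        have := hsub (Finset.mem_insert_self z W')
        simpa using this
      have hW'sub : W' ⊆ Eᶜ := (Finset.subset_insert z W').trans hsub
      obtain ⟨y, hyE, hyS⟩ := fresh S (by omega)
      have hyz : y ≠ z := fun h => hzE (h ▸ hyE)
      have hyW' : y ∉ W' := fun h => (by simpa using hW'sub h : y ∉ E) hyE
      have hmix := mix1 y z hyE hzE
      have hIH : f (S ∪ W') = 1 := ih hW'sub S hSE hodd hk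
      have hd : Disjoint ({y, z} : Finset (Fin n)) (S ∪ W') := by
        rw [Finset.disjoint_left]
        intro t ht ht'
        simp at ht ht'
        rcases ht with rfl | rfl
        · rcases ht' with h | h
          · exact hyS h
          · exact hyW' h
        · rcases ht' with h | h
          · exact hzE (hSE h)
          · exact hzW h
      have h11 := poly2 {y, z} (S ∪ W') hd
      rw [hmix, hIH] at h11
      have hcomp2 : f ((({y, z} : Finset (Fin n)) ∪ (S ∪ W'))ᶜ) = 2 := by
        have := relT1_elim h11; omega
      have hdy : Disjoint (S ∪ insert z W') ({y} : Finset (Fin n)) :=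
        Finset.disjoint_singleton_right.mpr (by simp [hyS, hyz, hyW'])
      have h12 := poly2 (S ∪ insert z W') {y} hdy
      have hu : (S ∪ insert z W') ∪ {y} = ({y, z} : Finset (Fin n)) ∪ (S ∪ W') := by
        ext t; simp; tauto
      rw [hu, one1 y hyE, hcomp2] at h12
      have := relT1_elim h12
      omega
  -- final contradiction
  rcases Nat.even_or_odd E.card with heven | hodd
  · -- |E| even: consider [n] \ {x}
    obtain ⟨x, hx⟩ := Finset.card_pos.mp (by omega : 0 < E.card)
    set S : Finset (Fin n) := E.erase x with hS
    have hScard : S.card = E.card - 1 := Finset.card_erase_of_mem hx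
    have hSE : S ⊆ E := Finset.erase_subset x E
    have hval : f (S ∪ Eᶜ) = 1 := by
      apply LM Eᶜ (subset_refl _) S hSE
      · rcases heven with ⟨m, hm⟩; rw [hScard, hm]; exact ⟨m - 1, by omega⟩
      · omega
    have hu : S ∪ Eᶜ = ({x} : Finset (Fin n))ᶜ := by
      ext t
      rw [hS]
      simp
      constructor
      · rintro (⟨h, _⟩ | h)
        · exact h
        · rintro rfl; exact h hx
      · intro h
        by_cases ht : t ∈ E <;> tauto
    rw [hu] at hval
    have h13 := poly2 {x} ∅ (Finset.disjoint_empty_right _)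
    rw [h0, Finset.union_empty, one1 x hx, hval] at h13
    have := relT1_elim h13
    omega
  · -- |E| odd: consider [n] \ {x1, x2}
    obtain ⟨x1, x2, hx1, hx2, hx12⟩ := Finset.one_lt_card_iff.mp (by omega : 1 < E.card)
    set S : Finset (Fin n) := E \ {x1, x2} with hS
    have hpsub : ({x1, x2} : Finset (Fin n)) ⊆ E := by
      simp [Finset.insert_subset_iff, hx1, hx2]
    have hScard : S.card = E.card - 2 := by
      rw [hS, Finset.card_sdiff_of_subset hpsub, Finset.card_pair hx12]
    have hSE : S ⊆ E := Finset.sdiff_subset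
    have hval : f (S ∪ Eᶜ) = 1 := by
      apply LM Eᶜ (subset_refl _) S hSE
      · rcases hodd with ⟨m, hm⟩; rw [hScard, hm]; exact ⟨m - 1, by omega⟩
      · omega
    have hu : S ∪ Eᶜ = ({x1, x2} : Finset (Fin n))ᶜ := by
      ext t
      rw [hS]
      simp
      constructor
      · rintro (⟨_, h⟩ | h)
        · exact h
        · constructor
          · rintro rfl; exact h hx1
          · rintro rfl; exact h hx2
      · intro h
        by_cases ht : t ∈ E <;> tauto
    rw [hu] at hval
    have := pairc2 x1 x2 hx1 hx2 hx12
    omega
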